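/- Let A, C ∈ B(H) commute with A positive invertible, ‖C‖ ≤ 1, and I + A(A-2I)C*C invertible. Set B = (I + A(A-2I)C*C)^{-1/2}, D = (I - C*C)^{1/2}, D_* = (I - CC*)^{1/2}, T = A B D C (note B, D commute with A). Define R on H ⊕ H as the block matrix with rows [BDC, BDD_*] and [(A-I)CBC, (A-I)CBD_*]. Then for all n ≥ 1, the (0,0) block of R^n equals A^{n-1}(BDC)^n = A^{-1/2} T^n A^{-1/2}. -/
import Mathlib


open ContinuousLinearMap

set_option maxHeartbeats 1000000
set_option synthInstance.maxHeartbeats 400000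

open Polynomial in
/-- If `X * c = c * Y` with `X, Y` selfadjoint, then `f(X) * c = c * f(Y)` for continuous `f`. -/
lemma cfc_intertwine_aux {E : Type*} [CStarAlgebra E]
    {X Y c : E} (hX : IsSelfAdjoint X) (hY : IsSelfAdjoint Y)
    (h : X * c = c * Y) {f : ℝ → ℝ} (hf : Continuous f) :
    cfc f X * c = c * cfc f Y := by
  set M : ℝ := max (‖X‖ * ‖(1:E)‖) (‖Y‖ * ‖(1:E)‖) with hM
  have hsub : ∀ Z : E, ‖Z‖ * ‖(1:E)‖ ≤ M → spectrum ℝ Z ⊆ Set.Icc (-M) M := by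
    intro Z hZ x hx
    have h2 := spectrum.subset_closedBall_norm_mul Z hx
    rw [Real.closedBall_eq_Icc] at h2
    simp only [zero_sub, zero_add] at h2
    exact Set.Icc_subset_Icc (neg_le_neg hZ) hZ h2
  have hXK : spectrum ℝ X ⊆ Set.Icc (-M) M := hsub X (le_max_left _ _)
  have hYK : spectrum ℝ Y ⊆ Set.Icc (-M) M := hsub Y (le_max_right _ _)
  set K : Set ℝ := Set.Icc (-M) M with hK
  haveI : CompactSpace K := isCompact_iff_compactSpace.mp isCompact_Icc
  let ιX : C(spectrum ℝ X, K) := ⟨Set.inclusion hXK, continuous_inclusion hXK⟩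
  let ιY : C(spectrum ℝ Y, K) := ⟨Set.inclusion hYK, continuous_inclusion hYK⟩
  have hpow : ∀ n : ℕ, X ^ n * c = c * Y ^ n := by
    intro n
    induction n with
    | zero => simp
    | succ n ih =>
      calc X ^ (n+1) * c = X ^ n * (X * c) := by rw [pow_succ, mul_assoc]
      _ = X ^ n * c * Y := by rw [h, mul_assoc]
      _ = c * (Y ^ n * Y) := by rw [ih, mul_assoc]
      _ = c * Y ^ (n+1) := by rw [← pow_succ]
  have haeval : ∀ p : ℝ[X], aeval X p * c = c * aeval Y p := by
    intro p
    induction p using Polynomial.induction_on' with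
    | add p q hp hq => simp [map_add, add_mul, mul_add, hp, hq]
    | monomial n r =>
      simp only [aeval_monomial]
      rw [mul_assoc, hpow n, ← mul_assoc, Algebra.commutes r c, mul_assoc]
  have key : ∀ (Z : E) (hZ : IsSelfAdjoint Z) (ιZ : C(spectrum ℝ Z, K))
      (hιZ : ∀ x, (ιZ x : ℝ) = x) (p : ℝ[X]),
      cfcHom hZ ((p.toContinuousMapOn K).comp ιZ) = aeval Z p := by
    intro Z hZ ιZ hιZ p
    have hcont : ContinuousOn p.eval (spectrum ℝ Z) := p.continuous.continuousOn
    have h1 : (p.toContinuousMapOn K).comp ιZ = ⟨_, hcont.restrict⟩ := by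
      ext x
      simp only [ContinuousMap.comp_apply, ContinuousMap.coe_mk, Set.restrict_apply,
        Polynomial.toContinuousMapOn_apply, Polynomial.toContinuousMap_apply]
      rw [hιZ]
    rw [h1, ← cfc_apply p.eval Z hZ hcont, cfc_polynomial p Z hZ]
  have hFcont : ∀ (Z : E) (hZ : IsSelfAdjoint Z) (ιZ : C(spectrum ℝ Z, K)),
      Continuous fun g : C(K, ℝ) => cfcHom hZ (g.comp ιZ) :=
    fun Z hZ ιZ => (cfcHom_isClosedEmbedding hZ).continuous.comp
      (ContinuousMap.continuous_precomp ιZ)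
  have hs : IsClosed {g : C(K, ℝ) | cfcHom hX (g.comp ιX) * c = c * cfcHom hY (g.comp ιY)} :=
    isClosed_eq (((hFcont X hX ιX)).mul continuous_const)
      (continuous_const.mul (hFcont Y hY ιY))
  have hdense := ContinuousMap.subalgebra_topologicalClosure_eq_top_of_separatesPoints
    (polynomialFunctions K) (polynomialFunctions_separatesPoints K)
  have hmem : ∀ g : C(K, ℝ), cfcHom hX (g.comp ιX) * c = c * cfcHom hY (g.comp ιY) := by
    intro g
    have hg : g ∈ closure (polynomialFunctions K : Set C(K, ℝ)) := by
      rw [← Subalgebra.topologicalClosure_coe, hdense]; trivial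
    have hsubset : (polynomialFunctions K : Set C(K, ℝ)) ⊆
        {g : C(K, ℝ) | cfcHom hX (g.comp ιX) * c = c * cfcHom hY (g.comp ιY)} := by
      rintro g hg
      rw [polynomialFunctions_coe] at hg
      obtain ⟨p, rfl⟩ := hg
      show cfcHom hX ((p.toContinuousMapOn K).comp ιX) * c
        = c * cfcHom hY ((p.toContinuousMapOn K).comp ιY)
      rw [key X hX ιX (fun x => rfl) p, key Y hY ιY (fun x => rfl) p]
      exact haeval p
    exact (closure_minimal hsubset hs : closure _ ⊆ _) hg
  have hfX : ContinuousOn f (spectrum ℝ X) := hf.continuousOn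
  have hfY : ContinuousOn f (spectrum ℝ Y) := hf.continuousOn
  have hg := hmem ((⟨f, hf⟩ : C(ℝ, ℝ)).restrict K)
  have eX : ((⟨f, hf⟩ : C(ℝ, ℝ)).restrict K).comp ιX = ⟨_, hfX.restrict⟩ := by ext x; rfl
  have eY : ((⟨f, hf⟩ : C(ℝ, ℝ)).restrict K).comp ιY = ⟨_, hfY.restrict⟩ := by ext x; rfl
  rw [eX, eY] at hg
  rw [cfc_apply f X hX hfX, cfc_apply f Y hY hfY]
  exact hg

lemma cfc_sqrt_mul_self_aux {E : Type*} [CStarAlgebra E] [PartialOrder E] [StarOrderedRing E]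
    {b : E} (hb : 0 ≤ b) : cfc Real.sqrt (b * b) = b := by
  have hsa : IsSelfAdjoint b := hb.isSelfAdjoint
  have h1 : b * b = cfc (fun x : ℝ => x ^ 2) b := by
    rw [cfc_pow_id b 2 hsa, sq]
  rw [h1, ← cfc_comp' Real.sqrt (fun x : ℝ => x ^ 2) b (by fun_prop) (by fun_prop)]
  have : ∀ x ∈ spectrum ℝ b, Real.sqrt (x ^ 2) = x := fun x hx =>
    Real.sqrt_sq (spectrum_nonneg_of_nonneg hb hx)
  rw [cfc_congr this, cfc_id' ℝ b hsa]

/-- positive square roots intertwine whenever the squares do -/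
lemma sqrt_intertwine_aux {E : Type*} [CStarAlgebra E] [PartialOrder E] [StarOrderedRing E]
    {dX dY c : E} (hX : 0 ≤ dX) (hY : 0 ≤ dY) (h : dX * dX * c = c * (dY * dY)) :
    dX * c = c * dY := by
  have hXsa : IsSelfAdjoint (dX * dX) := by
    have := hX.isSelfAdjoint
    rw [IsSelfAdjoint, star_mul, this.star_eq]
  have hYsa : IsSelfAdjoint (dY * dY) := by
    have := hY.isSelfAdjoint
    rw [IsSelfAdjoint, star_mul, this.star_eq]
  have := cfc_intertwine_aux hXsa hYsa h Real.continuous_sqrt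
  rwa [cfc_sqrt_mul_self_aux hX, cfc_sqrt_mul_self_aux hY] at this

lemma sqrt_comm_aux {E : Type*} [CStarAlgebra E] [PartialOrder E] [StarOrderedRing E]
    {d c : E} (hd : 0 ≤ d) (h : d * d * c = c * (d * d)) : d * c = c * d :=
  sqrt_intertwine_aux hd hd h

lemma comm_inv_aux {E : Type*} [Ring E] {a w v : E} (h1 : v * w = 1) (h2 : w * v = 1)
    (h : a * w = w * a) : a * v = v * a := by
  calc a * v = (v * w) * (a * v) := by rw [h1, one_mul]
  _ = v * ((w * a) * v) := by simp [mul_assoc]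
  _ = v * ((a * w) * v) := by rw [h]
  _ = v * (a * (w * v)) := by simp [mul_assoc]
  _ = v * a := by rw [h2, mul_one]

/-- With `A, C` commuting, `A` positive invertible (with `S = A^{-1/2}`), `‖C‖ ≤ 1`,
`B = (I + A(A-2I)C*C)^{-1/2}`, `D = (I - C*C)^{1/2}`, `D_* = (I - CC*)^{1/2}`,
`T = A B D C`, and `R` the block operator `[[BDC, BDD_*], [(A-I)CBC, (A-I)CBD_*]]` on
`H ⊕ H`, the `(0,0)` block of `Rⁿ` is `A^{n-1}(BDC)ⁿ = A^{-1/2} Tⁿ A^{-1/2}` for all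
`n ≥ 1`. -/
theorem stmt_18 {H : Type*} [NormedAddCommGroup H] [InnerProductSpace ℂ H] [CompleteSpace H]
    (A C : H →L[ℂ] H) (hAC : A * C = C * A) (hApos : A.IsPositive) (hC : ‖C‖ ≤ 1)
    (A' : H →L[ℂ] H) (hA' : A * A' = 1 ∧ A' * A = 1)
    (S : H →L[ℂ] H) (hSpos : S.IsPositive) (hSsq : S * S = A')
    (B : H →L[ℂ] H) (hBpos : B.IsPositive)
    (hBsq : B * B * (1 + A * (A - 2) * (adjoint C * C)) = 1 ∧
      (1 + A * (A - 2) * (adjoint C * C)) * (B * B) = 1)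
    (D : H →L[ℂ] H) (hDpos : D.IsPositive) (hDsq : D * D = 1 - adjoint C * C)
    (Dst : H →L[ℂ] H) (hDstpos : Dst.IsPositive) (hDstsq : Dst * Dst = 1 - C * adjoint C)
    (T : H →L[ℂ] H) (hT : T = A * B * D * C)
    (R : WithLp 2 (H × H) →L[ℂ] WithLp 2 (H × H))
    (hR : ∀ x : H × H,
      R ((WithLp.equiv 2 (H × H)).symm x) = (WithLp.equiv 2 (H × H)).symm
        (B (D (C x.1)) + B (D (Dst x.2)),
         (A - 1) (C (B (C x.1))) + (A - 1) (C (B (Dst x.2))))) :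
    ∀ n : ℕ, 1 ≤ n →
      (∀ h : H,
        ((WithLp.equiv 2 (H × H))
            ((R ^ n) ((WithLp.equiv 2 (H × H)).symm (h, 0)))).1 =
          (A ^ (n - 1) * (B * D * C) ^ n) h) ∧
      A ^ (n - 1) * (B * D * C) ^ n = S * T ^ n * S := by
  -- basic positivity / selfadjointness
  have hBnn : (0:H →L[ℂ] H) ≤ B := (nonneg_iff_isPositive B).mpr hBpos
  have hDnn : (0:H →L[ℂ] H) ≤ D := (nonneg_iff_isPositive D).mpr hDpos
  have hDstnn : (0:H →L[ℂ] H) ≤ Dst := (nonneg_iff_isPositive Dst).mpr hDstpos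
  have hSnn : (0:H →L[ℂ] H) ≤ S := (nonneg_iff_isPositive S).mpr hSpos
  have hA_sa : IsSelfAdjoint A := hApos.isSelfAdjoint
  -- A commutes with adjoint C
  have hACs : A * adjoint C = adjoint C * A := by
    have h1 := congrArg star hAC
    rw [star_mul, star_mul, hA_sa.star_eq, star_eq_adjoint] at h1
    exact h1.symm
  have hAK : A * (adjoint C * C) = (adjoint C * C) * A := by
    rw [← mul_assoc, hACs, mul_assoc, hAC, ← mul_assoc]
  have cAK : Commute A (adjoint C * C) := hAK
  have cA2 : Commute A (2 : H →L[ℂ] H) := Commute.ofNat_right A 2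
  have cAW : Commute A (1 + A * (A - 2) * (adjoint C * C)) :=
    (Commute.one_right A).add_right
      (((Commute.refl A).mul_right ((Commute.refl A).sub_right cA2)).mul_right cAK)
  -- A commutes with B, D, Dst
  have hAB2 : A * (B * B) = (B * B) * A := comm_inv_aux hBsq.1 hBsq.2 cAW.eq
  have hBA : B * A = A * B := sqrt_comm_aux hBnn hAB2.symm
  have hD2A : D * D * A = A * (D * D) := by
    rw [hDsq, sub_mul, one_mul, mul_sub, mul_one, hAK]
  have hDA : D * A = A * D := sqrt_comm_aux hDnn hD2A
  have hACCs : A * (C * adjoint C) = (C * adjoint C) * A := by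
    rw [← mul_assoc, hAC, mul_assoc, hACs, ← mul_assoc]
  have hDst2A : Dst * Dst * A = A * (Dst * Dst) := by
    rw [hDstsq, sub_mul, one_mul, mul_sub, mul_one, hACCs]
  have hDstA : Dst * A = A * Dst := sqrt_comm_aux hDstnn hDst2A
  -- B commutes with D
  have cKW : Commute (adjoint C * C) (1 + A * (A - 2) * (adjoint C * C)) :=
    (Commute.one_right _).add_right
      (((cAK.symm.mul_right (cAK.symm.sub_right (Commute.ofNat_right _ 2))).mul_right
        (Commute.refl _)))
  have c1KW : Commute (1 - adjoint C * C) (1 + A * (A - 2) * (adjoint C * C)) :=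
    (Commute.one_left _).sub_left cKW
  have hD2B2 : (D * D) * (B * B) = (B * B) * (D * D) := by
    rw [hDsq]
    exact comm_inv_aux hBsq.1 hBsq.2 c1KW.eq
  have hDB2 : D * (B * B) = (B * B) * D := sqrt_comm_aux hDnn hD2B2
  have hBD : B * D = D * B := sqrt_comm_aux hBnn hDB2.symm
  -- Dst * C = C * D
  have hDstC : Dst * C = C * D := by
    refine sqrt_intertwine_aux hDstnn hDnn ?_
    rw [hDstsq, hDsq, sub_mul, one_mul, mul_sub, mul_one, ← mul_assoc]
  -- S commutation
  have hSA' : S * A' = A' * S := by rw [← hSsq, mul_assoc]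
  have hSA : S * A = A * S := comm_inv_aux hA'.1 hA'.2 hSA'
  have hBA' : B * A' = A' * B := comm_inv_aux hA'.2 hA'.1 hBA
  have hSB : S * B = B * S := by
    refine sqrt_comm_aux hSnn ?_
    rw [hSsq]
    exact hBA'.symm
  have hDA' : D * A' = A' * D := comm_inv_aux hA'.2 hA'.1 hDA
  have hSD : S * D = D * S := by
    refine sqrt_comm_aux hSnn ?_
    rw [hSsq]
    exact hDA'.symm
  have hCA' : C * A' = A' * C := comm_inv_aux hA'.2 hA'.1 hAC.symm
  have hSC : S * C = C * S := by
    refine sqrt_comm_aux hSnn ?_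
    rw [hSsq]
    exact hCA'.symm
  -- part 2
  have cAB : Commute A B := hBA.symm
  have cAD : Commute A D := hDA.symm
  have cAC : Commute A C := hAC
  have cADst : Commute A Dst := hDstA.symm
  have cAX : Commute A (B * D * C) := (cAB.mul_right cAD).mul_right cAC
  have cSA : Commute S A := hSA
  have cSB : Commute S B := hSB
  have cSD : Commute S D := hSD
  have cSC : Commute S C := hSC
  have cSX : Commute S (B * D * C) := (cSB.mul_right cSD).mul_right cSC
  have cA'B : Commute A' B := hBA'.symm
  have cA'D : Commute A' D := hDA'.symm
  have cA'C : Commute A' C := hCA'.symm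
  have cA'X : Commute A' (B * D * C) := (cA'B.mul_right cA'D).mul_right cA'C
  have hTAX : T = A * (B * D * C) := by rw [hT, mul_assoc, mul_assoc, ← mul_assoc B]
  have part2 : ∀ m : ℕ, A ^ m * (B * D * C) ^ (m + 1) = S * T ^ (m + 1) * S := by
    intro m
    have hTn : T ^ (m + 1) = A ^ (m + 1) * (B * D * C) ^ (m + 1) := by
      rw [hTAX, cAX.mul_pow]
    have c1 : Commute S (A ^ (m + 1) * (B * D * C) ^ (m + 1)) :=
      (cSA.pow_right _).mul_right (cSX.pow_right _)
    rw [hTn, c1.eq, mul_assoc (A ^ (m + 1) * (B * D * C) ^ (m + 1)) S S, hSsq]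
    calc A ^ m * (B * D * C) ^ (m + 1)
        = A ^ m * (A * A') * (B * D * C) ^ (m + 1) := by rw [hA'.1, mul_one]
      _ = A ^ (m + 1) * (A' * (B * D * C) ^ (m + 1)) := by
          rw [pow_succ A m, ← mul_assoc (A ^ m) A A',
            mul_assoc (A ^ m * A) A' ((B * D * C) ^ (m + 1))]
      _ = A ^ (m + 1) * ((B * D * C) ^ (m + 1) * A') := by rw [(cA'X.pow_right _).eq]
      _ = A ^ (m + 1) * (B * D * C) ^ (m + 1) * A' := by
          rw [← mul_assoc (A ^ (m + 1)) ((B * D * C) ^ (m + 1)) A']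
  -- part 1: the evolution generator
  have cAM : Commute A (C * B * D + Dst * (A - 1) * C * B) := by
    refine Commute.add_right ?_ ?_
    · exact (cAC.mul_right cAB).mul_right cAD
    · exact ((cADst.mul_right
        ((Commute.refl A).sub_right (Commute.one_right A))).mul_right cAC).mul_right cAB
  set Mop : H →L[ℂ] H := C * B * D + Dst * (A - 1) * C * B with hMopdef
  have hone_add : ∀ z : H →L[ℂ] H, z + (A - 1) * z = A * z := by
    intro z
    rw [sub_mul, one_mul, add_sub_cancel]
  have hDst1 : Dst * (A - 1) = (A - 1) * Dst := by
    rw [mul_sub, sub_mul, mul_one, one_mul, hDstA]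
  have t1 : Dst * (A - 1) * C * B * C = (A - 1) * (C * B * D * C) := by
    calc Dst * (A - 1) * C * B * C
        = (A - 1) * Dst * C * B * C := by rw [hDst1]
      _ = (A - 1) * (Dst * C) * B * C := by rw [mul_assoc (A - 1) Dst C]
      _ = (A - 1) * (C * D) * B * C := by rw [hDstC]
      _ = (A - 1) * (C * (D * B)) * C := by
          rw [mul_assoc (A - 1) (C * D) B, mul_assoc C D B]
      _ = (A - 1) * (C * (B * D)) * C := by rw [← hBD]
      _ = (A - 1) * (C * B * D * C) := by
          rw [← mul_assoc C B D, mul_assoc (A - 1) (C * B * D) C]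
  have keyMC : Mop * C = A * (C * (B * D * C)) := by
    calc Mop * C = C * B * D * C + Dst * (A - 1) * C * B * C := by rw [hMopdef, add_mul]
      _ = C * B * D * C + (A - 1) * (C * B * D * C) := by rw [t1]
      _ = A * (C * B * D * C) := hone_add _
      _ = A * (C * (B * D * C)) := by rw [mul_assoc C B D, mul_assoc C (B * D) C]
  have key2 : ∀ m : ℕ, Mop ^ m * C = A ^ m * (C * (B * D * C) ^ m) := by
    intro m
    induction m with
    | zero => simp
    | succ m ih =>
      calc Mop ^ (m + 1) * C = Mop ^ m * (Mop * C) := by rw [pow_succ, mul_assoc]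
        _ = Mop ^ m * (A * (C * (B * D * C))) := by rw [keyMC]
        _ = A * (Mop ^ m * C * (B * D * C)) := by
            rw [← mul_assoc, (cAM.symm.pow_left m).eq, mul_assoc A (Mop ^ m),
              ← mul_assoc (Mop ^ m) C (B * D * C)]
        _ = A * (A ^ m * (C * (B * D * C) ^ m) * (B * D * C)) := by rw [ih]
        _ = A ^ (m + 1) * (C * (B * D * C) ^ (m + 1)) := by
            rw [mul_assoc (A ^ m) (C * (B * D * C) ^ m) (B * D * C),
              mul_assoc C ((B * D * C) ^ m) (B * D * C), ← mul_assoc A (A ^ m),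
              ← pow_succ' A, ← pow_succ (B * D * C)]
  have final1 : ∀ m : ℕ, B * D * Mop ^ m * C = A ^ m * (B * D * C) ^ (m + 1) := by
    intro m
    have cBD_Am : (B * D) * A ^ m = A ^ m * (B * D) := ((cAB.mul_right cAD).pow_left m).symm.eq
    calc B * D * Mop ^ m * C = (B * D) * (Mop ^ m * C) := by rw [mul_assoc]
      _ = (B * D) * (A ^ m * (C * (B * D * C) ^ m)) := by rw [key2]
      _ = A ^ m * ((B * D) * (C * (B * D * C) ^ m)) := by
          rw [← mul_assoc, cBD_Am, mul_assoc]
      _ = A ^ m * ((B * D * C) * (B * D * C) ^ m) := by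
          rw [← mul_assoc (B * D) C ((B * D * C) ^ m)]
      _ = A ^ m * (B * D * C) ^ (m + 1) := by rw [← pow_succ']
  -- the inductive description of R ^ (m+1)
  have inv : ∀ (m : ℕ) (h : H),
      (R ^ (m + 1)) ((WithLp.equiv 2 (H × H)).symm (h, 0)) =
      (WithLp.equiv 2 (H × H)).symm
        ((B * D * Mop ^ m * C) h, ((A - 1) * C * B * Mop ^ m * C) h) := by
    intro m h
    induction m with
    | zero =>
      rw [pow_one, hR (h, 0)]
      simp [ContinuousLinearMap.mul_apply, map_zero]
    | succ m ih =>
      have opid1 : B * D * Mop ^ (m + 1) * C =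
          B * D * C * (B * D * Mop ^ m * C) +
          B * D * Dst * ((A - 1) * C * B * Mop ^ m * C) := by
        rw [pow_succ']
        rw [hMopdef]
        simp only [add_mul, mul_add, mul_assoc]
      have opid2 : (A - 1) * C * B * Mop ^ (m + 1) * C =
          (A - 1) * C * B * C * (B * D * Mop ^ m * C) +
          (A - 1) * C * B * Dst * ((A - 1) * C * B * Mop ^ m * C) := by
        rw [pow_succ']
        rw [hMopdef]
        simp only [add_mul, mul_add, mul_assoc]
      rw [pow_succ', ContinuousLinearMap.mul_apply, ih,
        hR ((B * D * Mop ^ m * C) h, ((A - 1) * C * B * Mop ^ m * C) h)]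
      congr 1
      refine Prod.ext ?_ ?_
      · show B (D (C ((B * D * Mop ^ m * C) h))) + B (D (Dst (((A - 1) * C * B * Mop ^ m * C) h)))
          = (B * D * Mop ^ (m + 1) * C) h
        rw [opid1]
        simp [ContinuousLinearMap.add_apply, ContinuousLinearMap.mul_apply]
      · show (A - 1) (C (B (C ((B * D * Mop ^ m * C) h)))) +
            (A - 1) (C (B (Dst (((A - 1) * C * B * Mop ^ m * C) h))))
          = ((A - 1) * C * B * Mop ^ (m + 1) * C) h
        rw [opid2]
        simp [ContinuousLinearMap.add_apply, ContinuousLinearMap.mul_apply]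
  -- conclusion
  intro n hn
  obtain ⟨m, rfl⟩ : ∃ m, n = m + 1 := ⟨n - 1, by omega⟩
  constructor
  · intro h
    rw [inv m h, Equiv.apply_symm_apply]
    show (B * D * Mop ^ m * C) h = (A ^ (m + 1 - 1) * (B * D * C) ^ (m + 1)) h
    rw [Nat.add_sub_cancel, final1 m]
  · rw [Nat.add_sub_cancel]
    exact part2 m
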